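/- Let n be a positive integer and let e_1, …, e_k be positive integers satisfying e_1² + e_2² + ⋯ + e_k² ≤ n. Then 2^{e_1} + 2^{e_2} + ⋯ + 2^{e_k} ≤ 2·max(2^{√n} + n − 1, 1 + 2√2·(n − 1)). -/

import Mathlib

open Real Finset

-- monotonicity of 2^x / x^2 for 7 ≤ a ≤ b
lemma gmono (a b : ℝ) (ha : 7 ≤ a) (hab : a ≤ b) :
    (2:ℝ) ^ a * b ^ 2 ≤ (2:ℝ) ^ b * a ^ 2 := by
  have ha0 : (0:ℝ) < a := by linarith
  have hb0 : (0:ℝ) < b := by linarith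
  have hlog : Real.log (b / a) ≤ b / a - 1 := Real.log_le_sub_one_of_pos (by positivity)
  have h1 : b / a - 1 = (b - a) / a := by field_simp
  have h2 : (b - a) / a ≤ (b - a) / 7 := by gcongr <;> linarith
  have hl2 : (0.6931471803 : ℝ) < Real.log 2 := Real.log_two_gt_d9
  have h3 : 2 * Real.log (b / a) ≤ (b - a) * Real.log 2 := by
    have : Real.log (b/a) ≤ (b - a)/7 := by linarith [h1 ▸ hlog]
    nlinarith [sub_nonneg.mpr hab]
  have h4 : Real.log b - Real.log a = Real.log (b / a) := (Real.log_div hb0.ne' ha0.ne').symm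
  have hL : Real.log ((2:ℝ) ^ a * b ^ 2) ≤ Real.log ((2:ℝ) ^ b * a ^ 2) := by
    rw [Real.log_mul (by positivity) (by positivity),
        Real.log_mul (by positivity) (by positivity),
        Real.log_rpow (by norm_num), Real.log_rpow (by norm_num),
        Real.log_pow, Real.log_pow]
    push_cast
    nlinarith [h3, h4]
  exact (Real.log_le_log_iff (by positivity) (by positivity)).mp hL

lemma key (n : ℕ) (hn : 0 < n) (e : ℕ) (he : 1 ≤ e) (he2 : (e:ℝ)^2 ≤ n) :
    (2:ℝ) ^ (e:ℝ) ≤ ((2:ℝ) ^ Real.sqrt n / n + 2 * Real.sqrt 2) * (e:ℝ)^2 := by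
  have hn0 : (0:ℝ) < n := by exact_mod_cast hn
  have hC : (0:ℝ) ≤ (2:ℝ) ^ Real.sqrt n / n := by positivity
  have hs2 : (1:ℝ) ≤ Real.sqrt 2 := by
    nlinarith [Real.sq_sqrt (by norm_num : (0:ℝ) ≤ 2), Real.sqrt_nonneg 2]
  by_cases h6 : e ≤ 6
  · have hsmall : (2:ℝ) ^ (e:ℝ) ≤ 2 * (e:ℝ)^2 := by
      rw [show ((e:ℝ)) = ((e:ℕ):ℝ) from rfl, Real.rpow_natCast]
      interval_cases e <;>· norm_num
    have : 2 * (e:ℝ)^2 ≤ 2 * Real.sqrt 2 * (e:ℝ)^2 := by nlinarith [sq_nonneg (e:ℝ)]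
    nlinarith [mul_nonneg hC (sq_nonneg (e:ℝ))]
  · push_neg at h6
    have h7 : (7:ℝ) ≤ (e:ℝ) := by exact_mod_cast h6
    have hes : (e:ℝ) ≤ Real.sqrt n := by
      exact (Real.le_sqrt (by positivity) (by positivity)).mpr he2
    have hmono := gmono (e:ℝ) (Real.sqrt n) h7 hes
    have hsq : Real.sqrt n ^ 2 = (n:ℝ) := Real.sq_sqrt (le_of_lt hn0)
    rw [hsq] at hmono
    have : (2:ℝ) ^ (e:ℝ) ≤ (2:ℝ) ^ Real.sqrt n / n * (e:ℝ)^2 := by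
      rw [div_mul_eq_mul_div, le_div_iff₀ hn0]
      linarith
    nlinarith [mul_nonneg (mul_nonneg (by norm_num : (0:ℝ) ≤ 2) (Real.sqrt_nonneg 2)) (sq_nonneg (e:ℝ))]

/-- Numerical core of Corollary `exp`: positive integers `e_1, …, e_k` with
`∑ e_i² ≤ n` satisfy `∑ 2^{e_i} ≤ 2·max(2^{√n} + n − 1, 1 + 2√2·(n − 1))`. -/
theorem stmt_0 (n : ℕ) (hn : 0 < n) (k : ℕ) (e : Fin k → ℕ)
    (hpos : ∀ i, 0 < e i)
    (hsum : (∑ i, (e i) ^ 2) ≤ n) :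
    (∑ i, (2 : ℝ) ^ (e i : ℝ)) ≤
      2 * max ((2 : ℝ) ^ Real.sqrt n + n - 1)
              (1 + 2 * Real.sqrt 2 * ((n : ℝ) - 1)) := by
  have hn0 : (0:ℝ) < n := by exact_mod_cast hn
  have hA1 : (1:ℝ) ≤ (2:ℝ) ^ Real.sqrt n := by
    calc (1:ℝ) = (2:ℝ) ^ (0:ℝ) := by norm_num
    _ ≤ (2:ℝ) ^ Real.sqrt n :=
      Real.rpow_le_rpow_of_exponent_le one_le_two (Real.sqrt_nonneg _)
  have hsingle : ∀ i : Fin k, (e i)^2 ≤ n := fun i =>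
    le_trans (Finset.single_le_sum (f := fun j => (e j)^2) (fun _ _ => Nat.zero_le _)
      (Finset.mem_univ i)) hsum
  have hmaxA := le_max_left ((2:ℝ) ^ Real.sqrt n + n - 1) (1 + 2 * Real.sqrt 2 * ((n:ℝ) - 1))
  have hmaxB := le_max_right ((2:ℝ) ^ Real.sqrt n + n - 1) (1 + 2 * Real.sqrt 2 * ((n:ℝ) - 1))
  by_cases hn3 : 3 ≤ n
  · have hn3' : (3:ℝ) ≤ n := by exact_mod_cast hn3
    have hs2 : Real.sqrt 2 ≤ 1.5 := by
      nlinarith [Real.sq_sqrt (by norm_num : (0:ℝ) ≤ 2), Real.sqrt_nonneg 2]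
    set C := (2:ℝ) ^ Real.sqrt n / n + 2 * Real.sqrt 2 with hC
    have hC0 : 0 ≤ C := by positivity
    have step1 : (∑ i, (2 : ℝ) ^ (e i : ℝ)) ≤ ∑ i, C * (e i : ℝ)^2 := by
      apply Finset.sum_le_sum
      intro i _
      apply key n hn (e i) (hpos i)
      have := hsingle i
      exact_mod_cast this
    have step2 : ∑ i, C * (e i : ℝ)^2 ≤ C * n := by
      rw [← Finset.mul_sum]
      apply mul_le_mul_of_nonneg_left _ hC0
      exact_mod_cast hsum
    have step3 : C * n = (2:ℝ) ^ Real.sqrt n + 2 * Real.sqrt 2 * n := by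
      rw [hC, add_mul, div_mul_cancel₀ _ hn0.ne']
    have step4 : (2:ℝ) ^ Real.sqrt n + 2 * Real.sqrt 2 * n ≤
        ((2:ℝ) ^ Real.sqrt n + n - 1) + (1 + 2 * Real.sqrt 2 * ((n:ℝ) - 1)) := by
      nlinarith [Real.sqrt_nonneg 2]
    linarith [step1, step2, step3 ▸ step2]
  · push_neg at hn3
    have hone : ∀ i : Fin k, e i = 1 := by
      intro i
      have h2 := hsingle i
      have := hpos i
      nlinarith [this, h2, hn3]
    have hsum1 : (∑ i, (e i)^2) = k := by
      simp [hone]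
    have hk : (k:ℝ) ≤ n := by exact_mod_cast hsum1 ▸ hsum
    have : (∑ i, (2 : ℝ) ^ (e i : ℝ)) = 2 * k := by
      simp [hone]
      ring
    rw [this]
    have : (2:ℝ) * k ≤ 2 * ((2:ℝ) ^ Real.sqrt n + n - 1) := by linarith
    linarith
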